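/- Let γ ∈ ℝ² \ ℚ², k ≥ 0, and let B_k ≥ 2 be the smallest positive integer B such that there exists A ∈ ℤ² with |γ − A/B| < 2^{-k}. Let b_k be the smallest positive integer b with 1 ≤ b < B_k such that ‖bγ‖ ≤ B_k^{-1/2} (which exists by Dirichlet's simultaneous approximation theorem). Then b_k ≤ 2^k / B_k^{1/2}. -/

import Mathlib

/-- Maximum-norm distance from a point of `ℝ × ℝ` to the nearest integer vector. -/
noncomputable def nint2 (x : ℝ × ℝ) : ℝ := max |x.1 - round x.1| |x.2 - round x.2|

theorem bk_bound (γ : ℝ × ℝ)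
    (hγ : ¬ ∃ p : ℚ × ℚ, ((p.1 : ℝ), (p.2 : ℝ)) = γ) (k : ℕ) (Bk bk : ℕ)
    (hBk2 : 2 ≤ Bk)
    (hBk : IsLeast {B : ℕ | 0 < B ∧ ∃ A : ℤ × ℤ,
      max |γ.1 - (A.1 : ℝ) / B| |γ.2 - (A.2 : ℝ) / B| < (2 : ℝ) ^ (-(k : ℤ))} Bk)
    (hbk : IsLeast {b : ℕ | 1 ≤ b ∧ b < Bk ∧
      nint2 ((b : ℝ) * γ.1, (b : ℝ) * γ.2) ≤ (Bk : ℝ) ^ (-(1 / 2 : ℝ))} bk) :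
    (bk : ℝ) ≤ 2 ^ k / Real.sqrt Bk := by
  obtain ⟨⟨hb1, hbB, hnint⟩, _⟩ := hbk
  by_contra hlt
  push_neg at hlt
  have hBpos : (0 : ℝ) < Bk := by positivity
  have hsq : (0 : ℝ) < Real.sqrt Bk := Real.sqrt_pos.mpr hBpos
  have hbpos : (0 : ℝ) < bk := by exact_mod_cast hb1
  -- rewrite the rpow as 1/√Bk
  have hrpow : (Bk : ℝ) ^ (-(1 / 2 : ℝ)) = 1 / Real.sqrt Bk := by
    rw [Real.rpow_neg hBpos.le, ← Real.sqrt_eq_rpow, one_div]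
  rw [hrpow] at hnint
  simp only [nint2] at hnint
  have key : ∀ x : ℝ, |(bk : ℝ) * x - round ((bk : ℝ) * x)| ≤ 1 / Real.sqrt Bk →
      |x - (round ((bk : ℝ) * x) : ℝ) / bk| < (2 : ℝ) ^ (-(k : ℤ)) := by
    intro x hx
    have h1 : x - (round ((bk : ℝ) * x) : ℝ) / bk
        = ((bk : ℝ) * x - round ((bk : ℝ) * x)) / bk := by
      field_simp
    rw [h1, abs_div, abs_of_pos hbpos]
    have h2 : |(bk : ℝ) * x - round ((bk : ℝ) * x)| / bk ≤ (1 / Real.sqrt Bk) / bk := by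
      gcongr
    refine h2.trans_lt ?_
    rw [div_lt_iff₀ hbpos]
    have h3 : (2 : ℝ) ^ (-(k : ℤ)) * (2 ^ k / Real.sqrt Bk) = 1 / Real.sqrt Bk := by
      rw [zpow_neg, zpow_natCast]
      field_simp
    calc (1 : ℝ) / Real.sqrt Bk = (2 : ℝ) ^ (-(k : ℤ)) * (2 ^ k / Real.sqrt Bk) := h3.symm
      _ < (2 : ℝ) ^ (-(k : ℤ)) * bk := mul_lt_mul_of_pos_left hlt (by positivity)
  have hmem : bk ∈ {B : ℕ | 0 < B ∧ ∃ A : ℤ × ℤ,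
      max |γ.1 - (A.1 : ℝ) / B| |γ.2 - (A.2 : ℝ) / B| < (2 : ℝ) ^ (-(k : ℤ))} :=
    ⟨hb1, (round ((bk : ℝ) * γ.1), round ((bk : ℝ) * γ.2)),
      max_lt (key γ.1 ((le_max_left _ _).trans hnint))
        (key γ.2 ((le_max_right _ _).trans hnint))⟩
  exact absurd (hBk.2 hmem) (not_le.mpr hbB)
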